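/- Let H be a separable infinite-dimensional Hilbert space with orthonormal basis {e_n}_{n∈ℤ}, U the bilateral shift (Ue_n = e_{n−1}), A = U + 2U*, and let M, N be the diagonal operators M e_n = α_n e_n, N e_n = β_n e_n with α_n = (1 + 4^{−n})^{−1/2} and β_n = 2^{−n}(1 + 4^{−n})^{−1/2}. Then M, N are commuting positive contractions with M² + N² = I, and N A M − M A* N = 0. -/

import Mathlib

open ContinuousLinearMap

section Aux
set_option linter.unusedSectionVars false
variable {H : Type*} [NormedAddCommGroup H] [InnerProductSpace ℂ H] [CompleteSpace H]
  (e : HilbertBasis ℤ ℂ H)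

local notation "⟪" x ", " y "⟫" => inner (𝕜 := ℂ) x y

lemma hb_clm_ext {T S : H →L[ℂ] H} (h : ∀ n, T (e n) = S (e n)) : T = S := by
  refine ContinuousLinearMap.ext_on
    (Submodule.dense_iff_topologicalClosure_eq_top.mpr e.dense_span) ?_
  rintro _ ⟨n, rfl⟩; exact h n

lemma hb_vec_ext {x y : H} (h : ∀ n, ⟪e n, x⟫ = ⟪e n, y⟫) : x = y := by
  apply e.repr.injective
  apply lp.ext
  funext n
  rw [e.repr_apply_apply, e.repr_apply_apply]
  exact h n

lemma hb_inner_basis (m n : ℤ) : ⟪e m, e n⟫ = if m = n then 1 else 0 :=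
  orthonormal_iff_ite.mp e.orthonormal m n

variable {c : ℤ → ℝ} {D : H →L[ℂ] H}

lemma diag_sa (hD : ∀ n, D (e n) = ((c n : ℝ) : ℂ) • e n) : adjoint D = D := by
  apply hb_clm_ext e
  intro n
  apply hb_vec_ext e
  intro m
  rw [adjoint_inner_right, hD, hD, inner_smul_right, inner_smul_left,
    Complex.conj_ofReal, hb_inner_basis]
  by_cases h : m = n
  · subst h; rfl
  · simp [h]

lemma diag_coord (hD : ∀ n, D (e n) = ((c n : ℝ) : ℂ) • e n) (x : H) (n : ℤ) :
    ⟪e n, D x⟫ = ((c n : ℝ) : ℂ) * ⟪e n, x⟫ := by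
  rw [← adjoint_inner_left, diag_sa e hD, hD, inner_smul_left, Complex.conj_ofReal]

lemma diag_term1 (hD : ∀ n, D (e n) = ((c n : ℝ) : ℂ) • e n) (x y : H) (n : ℤ) :
    ⟪D x, e n⟫ * ⟪e n, y⟫ = ((c n : ℝ) : ℂ) * (⟪x, e n⟫ * ⟪e n, y⟫) := by
  have ha : ⟪D x, e n⟫ = (starRingEnd ℂ) (((c n : ℝ) : ℂ) * ⟪e n, x⟫) := by
    rw [← inner_conj_symm, diag_coord e hD]
  rw [ha, map_mul, Complex.conj_ofReal, inner_conj_symm]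
  ring

lemma diag_term (hD : ∀ n, D (e n) = ((c n : ℝ) : ℂ) • e n) (x y : H) (n : ℤ) :
    ⟪D x, e n⟫ * ⟪e n, D y⟫ = ((c n ^ 2 : ℝ) : ℂ) * (⟪x, e n⟫ * ⟪e n, y⟫) := by
  rw [diag_term1 e hD, diag_coord e hD]
  push_cast
  ring

lemma diag_pos (hD : ∀ n, D (e n) = ((c n : ℝ) : ℂ) • e n) (hc : ∀ n, 0 ≤ c n) :
    D.IsPositive := by
  refine ⟨isSelfAdjoint_iff_isSymmetric.mp (isSelfAdjoint_iff'.mpr (diag_sa e hD)), fun x => ?_⟩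
  rw [reApplyInnerSelf_apply]
  have h1 : HasSum (fun n => ⟪D x, e n⟫ * ⟪e n, x⟫) ⟪D x, x⟫ :=
    e.hasSum_inner_mul_inner (D x) x
  have h2 : HasSum (fun n => (⟪D x, e n⟫ * ⟪e n, x⟫).re) (⟪D x, x⟫).re := by
    simpa using h1.mapL Complex.reCLM
  simp only [RCLike.re_to_complex]
  rw [← h2.tsum_eq]
  refine tsum_nonneg fun n => ?_
  have hx : ⟪x, e n⟫ * ⟪e n, x⟫ = ((‖⟪e n, x⟫‖ ^ 2 : ℝ) : ℂ) := by
    rw [← inner_conj_symm x (e n), RCLike.conj_mul]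
    norm_cast
  rw [diag_term1 e hD, hx, ← Complex.ofReal_mul, Complex.ofReal_re]
  exact mul_nonneg (hc n) (sq_nonneg _)

lemma diag_norm (hD : ∀ n, D (e n) = ((c n : ℝ) : ℂ) • e n) (hc : ∀ n, |c n| ≤ 1) :
    ‖D‖ ≤ 1 := by
  refine opNorm_le_bound D zero_le_one fun x => ?_
  rw [one_mul]
  have h1 : HasSum (fun n => (⟪D x, e n⟫ * ⟪e n, D x⟫).re) (⟪D x, D x⟫).re := by
    simpa using (e.hasSum_inner_mul_inner (D x) (D x)).mapL Complex.reCLM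
  have h2 : HasSum (fun n => (⟪x, e n⟫ * ⟪e n, x⟫).re) (⟪x, x⟫).re := by
    simpa using (e.hasSum_inner_mul_inner x x).mapL Complex.reCLM
  have hxn : ∀ n, ⟪x, e n⟫ * ⟪e n, x⟫ = ((‖⟪e n, x⟫‖ ^ 2 : ℝ) : ℂ) := by
    intro n
    rw [← inner_conj_symm x (e n), RCLike.conj_mul]
    norm_cast
  have hle : (⟪D x, D x⟫).re ≤ (⟪x, x⟫).re := by
    refine hasSum_le (fun n => ?_) h1 h2
    rw [diag_term e hD, hxn n, ← Complex.ofReal_mul, Complex.ofReal_re, Complex.ofReal_re]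
    have hc2 : c n ^ 2 ≤ 1 := by nlinarith [sq_abs (c n), hc n, abs_nonneg (c n)]
    nlinarith [sq_nonneg ‖⟪e n, x⟫‖]
  have hDx : (⟪D x, D x⟫).re = ‖D x‖ ^ 2 := by
    simpa using inner_self_eq_norm_sq (𝕜 := ℂ) (D x)
  have hx : (⟪x, x⟫).re = ‖x‖ ^ 2 := by
    simpa using inner_self_eq_norm_sq (𝕜 := ℂ) x
  rw [hDx, hx] at hle
  nlinarith [norm_nonneg (D x), norm_nonneg x]

lemma shift_adjoint {U : H →L[ℂ] H} (hU : ∀ n : ℤ, U (e n) = e (n - 1)) :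
    ∀ n, adjoint U (e n) = e (n + 1) := by
  intro n
  apply hb_vec_ext e
  intro m
  rw [adjoint_inner_right, hU, hb_inner_basis, hb_inner_basis]
  have : (m - 1 = n) ↔ (m = n + 1) := by omega
  simp [this]

end Aux
open ContinuousLinearMap

/- With A = U + 2U* for the bilateral shift U, and diagonal operators
M eₙ = αₙ eₙ, N eₙ = βₙ eₙ with αₙ = (1+4⁻ⁿ)^{-1/2}, βₙ = 2⁻ⁿ(1+4⁻ⁿ)^{-1/2},
the operators M and N are commuting positive contractions with M² + N² = I, and
N A M - M A* N = 0. -/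
theorem diagonal_intertwiner_vanishes (H : Type*) [NormedAddCommGroup H]
    [InnerProductSpace ℂ H] [CompleteSpace H]
    (e : HilbertBasis ℤ ℂ H) (U M N : H →L[ℂ] H)
    (hU : ∀ n : ℤ, U (e n) = e (n - 1))
    (hM : ∀ n : ℤ, M (e n) = ((1 / Real.sqrt (1 + (4 : ℝ) ^ (-n)) : ℝ) : ℂ) • e n)
    (hN : ∀ n : ℤ, N (e n) =
      (((2 : ℝ) ^ (-n) / Real.sqrt (1 + (4 : ℝ) ^ (-n)) : ℝ) : ℂ) • e n) :
    M.IsPositive ∧ N.IsPositive ∧ ‖M‖ ≤ 1 ∧ ‖N‖ ≤ 1 ∧ M * N = N * M ∧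
      M ^ 2 + N ^ 2 = 1 ∧
      N * (U + 2 • adjoint U) * M - M * adjoint (U + 2 • adjoint U) * N = 0 := by
  obtain ⟨α, hα⟩ : ∃ α : ℤ → ℝ, ∀ n, α n = 1 / Real.sqrt (1 + (4 : ℝ) ^ (-n)) :=
    ⟨_, fun _ => rfl⟩
  obtain ⟨β, hβ⟩ : ∃ β : ℤ → ℝ,
      ∀ n, β n = (2 : ℝ) ^ (-n) / Real.sqrt (1 + (4 : ℝ) ^ (-n)) := ⟨_, fun _ => rfl⟩
  have hM' : ∀ n, M (e n) = ((α n : ℝ) : ℂ) • e n := fun n => by rw [hα]; exact hM n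
  have hN' : ∀ n, N (e n) = ((β n : ℝ) : ℂ) • e n := fun n => by rw [hβ]; exact hN n
  have hs : ∀ n : ℤ, 0 < 1 + (4 : ℝ) ^ (-n) := fun n => by positivity
  have h4 : ∀ n : ℤ, (2 : ℝ) ^ (-n) * (2 : ℝ) ^ (-n) = (4 : ℝ) ^ (-n) := by
    intro n; rw [show (4 : ℝ) = 2 * 2 by norm_num, mul_zpow]
  have hαnn : ∀ n, 0 ≤ α n := fun n => by rw [hα]; positivity
  have hβnn : ∀ n, 0 ≤ β n := fun n => by rw [hβ]; positivity
  have hα1 : ∀ n, |α n| ≤ 1 := by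
    intro n
    rw [abs_of_nonneg (hαnn n), hα, div_le_one (Real.sqrt_pos.mpr (hs n))]
    calc (1 : ℝ) = Real.sqrt 1 := Real.sqrt_one.symm
      _ ≤ _ := Real.sqrt_le_sqrt (by nlinarith [zpow_pos (show (0:ℝ) < 4 by norm_num) (-n)])
  have hβ1 : ∀ n, |β n| ≤ 1 := by
    intro n
    rw [abs_of_nonneg (hβnn n), hβ, div_le_one (Real.sqrt_pos.mpr (hs n))]
    have h2s : (2 : ℝ) ^ (-n) = Real.sqrt ((4 : ℝ) ^ (-n)) := by
      rw [← h4 n, show (2:ℝ)^(-n) * (2:ℝ)^(-n) = ((2:ℝ)^(-n))^2 by ring,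
        Real.sqrt_sq (by positivity)]
    rw [h2s]
    exact Real.sqrt_le_sqrt (by linarith)
  have key1 : ∀ n, α n * α n + β n * β n = 1 := by
    intro n
    rw [hα, hβ, div_mul_div_comm, div_mul_div_comm, Real.mul_self_sqrt (hs n).le,
      one_mul, h4 n, ← add_div, div_self (hs n).ne']
  have hαβ : ∀ n, β n = (2 : ℝ) ^ (-n) * α n := by
    intro n; rw [hα, hβ]; ring
  have hU' := shift_adjoint e hU
  refine ⟨diag_pos e hM' hαnn, diag_pos e hN' hβnn, diag_norm e hM' hα1,
    diag_norm e hN' hβ1, ?_, ?_, ?_⟩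
  · apply hb_clm_ext e
    intro n
    simp only [ContinuousLinearMap.mul_apply, hM', hN', map_smul, smul_smul]
    rw [mul_comm]
  · apply hb_clm_ext e
    intro n
    simp only [ContinuousLinearMap.add_apply, pow_two, ContinuousLinearMap.mul_apply,
      ContinuousLinearMap.one_apply, hM', hN', map_smul, smul_smul]
    have hone : ((α n : ℝ) : ℂ) * ((α n : ℝ) : ℂ) + ((β n : ℝ) : ℂ) * ((β n : ℝ) : ℂ) = 1 := by
      rw [← Complex.ofReal_mul, ← Complex.ofReal_mul, ← Complex.ofReal_add, key1 n,
        Complex.ofReal_one]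
    rw [← add_smul, hone, one_smul]
  · have hadj : adjoint (U + 2 • adjoint U) = adjoint U + 2 • U := by
      simp only [← star_eq_adjoint, star_add, star_nsmul, star_star]
    rw [sub_eq_zero]
    apply hb_clm_ext e
    intro n
    have hL : (N * (U + 2 • adjoint U) * M : H →L[ℂ] H) (e n)
        = ((α n * β (n - 1) : ℝ) : ℂ) • e (n - 1)
          + ((2 * (α n * β (n + 1)) : ℝ) : ℂ) • e (n + 1) := by
      simp only [ContinuousLinearMap.mul_apply, two_smul, ContinuousLinearMap.add_apply,
        hM', map_smul, map_add, hU, hU', hN']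
      push_cast
      module
    have hR : (M * adjoint (U + 2 • adjoint U) * N : H →L[ℂ] H) (e n)
        = ((2 * (β n * α (n - 1)) : ℝ) : ℂ) • e (n - 1)
          + ((β n * α (n + 1) : ℝ) : ℂ) • e (n + 1) := by
      rw [hadj]
      simp only [ContinuousLinearMap.mul_apply, two_smul, ContinuousLinearMap.add_apply,
        hN', map_smul, map_add, hU, hU', hM']
      push_cast
      module
    have h2a : (2 : ℝ) ^ (-(n - 1)) = 2 * (2 : ℝ) ^ (-n) := by
      rw [show -(n - 1) = 1 + -n by ring, zpow_add₀ (two_ne_zero (α := ℝ)), zpow_one]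
    have h2b : (2 : ℝ) ^ (-(n + 1)) = 2⁻¹ * (2 : ℝ) ^ (-n) := by
      rw [show -(n + 1) = -1 + -n by ring, zpow_add₀ (two_ne_zero (α := ℝ)), zpow_neg_one]
    have r1 : α n * β (n - 1) = 2 * (β n * α (n - 1)) := by
      simp only [hαβ, h2a]; ring
    have r2 : 2 * (α n * β (n + 1)) = β n * α (n + 1) := by
      simp only [hαβ, h2b]; ring
    rw [hL, hR, r1, r2]
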